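/- arXiv:1101.1805 — 4 statements merged into one kernel-verified Lean document; each statement's English description precedes it below -/
import Mathlib

section
/- Let P, Q be integers such that the discriminant D = P^2 − 4Q of the characteristic equation of U(P,Q) is zero. Then the Lucas sequence U = U(P,Q), extended to ℤ by zero on negative indices, is 1-fold log-concave: (𝓛 U) n ≥ 0 for every n ∈ ℤ. -/
/-- The Lucas sequence of the first kind `U(P,Q)`. -/
def lucasU (P Q : ℤ) : ℕ → ℤ
  | 0 => 0
  | 1 => 1
  | n + 2 => P * lucasU P Q (n + 1) - Q * lucasU P Q n

/-- The Lucas sequence extended to `ℤ` by zero on negative indices, as a real sequence. -/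
def lucasUZ (P Q : ℤ) : ℤ → ℝ := fun n => if n < 0 then 0 else (lucasU P Q n.toNat : ℝ)

/-- The log-operator on sequences indexed by `ℤ`. -/
def logOp (a : ℤ → ℝ) : ℤ → ℝ := fun n => (a n) ^ 2 - a (n - 1) * a (n + 1)

lemma lucasU_formula (m : ℤ) : ∀ n : ℕ, lucasU (2*m) (m^2) (n+1) = (n+1) * m^n := by
  intro n
  induction n using Nat.twoStepInduction with
  | zero => simp [lucasU]
  | one => show lucasU (2*m) (m^2) 2 = _; simp [lucasU]
  | more n ih1 ih2 =>
      show lucasU (2*m) (m^2) (n+3) = _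
      have : lucasU (2*m) (m^2) (n+3) = (2*m) * lucasU (2*m) (m^2) (n+2) - m^2 * lucasU (2*m) (m^2) (n+1) := rfl
      rw [this, ih1, ih2]
      push_cast
      ring

theorem lucasU_zero_discriminant_log_concave (P Q : ℤ) (hD : P ^ 2 - 4 * Q = 0) :
    ∀ n : ℤ, 0 ≤ logOp (lucasUZ P Q) n := by
  have hPe : Even P := by
    have : Even (P^2) := ⟨2*Q, by linarith⟩
    simpa [Int.even_pow] using this
  obtain ⟨m, hm⟩ := hPe
  have hP : P = 2*m := by linarith
  rw [hP] at hD
  have hQ : Q = m^2 := by nlinarith [hD]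
  subst hP hQ
  intro n
  rcases lt_or_ge n 0 with hn | hn
  · have h1 : lucasUZ (2*m) (m^2) n = 0 := by simp [lucasUZ, hn]
    have h2 : lucasUZ (2*m) (m^2) (n-1) = 0 := by simp [lucasUZ]; omega
    simp [logOp, h1, h2]
  rcases eq_or_lt_of_le hn with h0 | h0
  · have h2 : lucasUZ (2*m) (m^2) (n-1) = 0 := by simp [lucasUZ]; omega
    have h1 : lucasUZ (2*m) (m^2) n = 0 := by
      simp only [lucasUZ]
      rw [if_neg (by omega)]
      have : n.toNat = 0 := by omega
      simp [this, lucasU]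
    simp [logOp, h1, h2]
  obtain ⟨k, hk⟩ : ∃ k : ℕ, n = (k : ℤ) + 1 := ⟨(n-1).toNat, by omega⟩
  subst hk
  have e1 : lucasUZ (2*m) (m^2) ((k:ℤ)+1) = ((lucasU (2*m) (m^2) (k+1) : ℤ) : ℝ) := by
    simp only [lucasUZ]; rw [if_neg (by omega)]
    have : ((k:ℤ)+1).toNat = k+1 := by omega
    rw [this]
  have e2 : lucasUZ (2*m) (m^2) ((k:ℤ)+1-1) = ((lucasU (2*m) (m^2) k : ℤ) : ℝ) := by
    simp only [lucasUZ]; rw [if_neg (by omega)]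
    have : ((k:ℤ)+1-1).toNat = k := by omega
    rw [this]
  have e3 : lucasUZ (2*m) (m^2) ((k:ℤ)+1+1) = ((lucasU (2*m) (m^2) (k+2) : ℤ) : ℝ) := by
    simp only [lucasUZ]; rw [if_neg (by omega)]
    have : ((k:ℤ)+1+1).toNat = k+2 := by omega
    rw [this]
  simp only [logOp, e1, e2, e3]
  have key : (0:ℤ) ≤ lucasU (2*m) (m^2) (k+1) ^ 2 - lucasU (2*m) (m^2) k * lucasU (2*m) (m^2) (k+2) := by
    cases k with
    | zero => simp [lucasU_formula, lucasU]
    | succ j =>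
        rw [lucasU_formula, lucasU_formula, show j+1+2 = (j+2)+1 from rfl, lucasU_formula]
        calc (0:ℤ) ≤ (m^j*m)^2 := sq_nonneg _
          _ = _ := by
            rw [show j+2 = j+1+1 from rfl, pow_succ, pow_succ]
            push_cast; ring
  exact_mod_cast key
end

section
/- Let P, Q be integers such that there exists an integer S with P = 2S and Q = S^2. Then the Lucas sequence U = U(P,Q), extended to ℤ by zero on negative indices, is infinitely log-concave: for every i ≥ 1 and every n ∈ ℤ, (𝓛^i U) n ≥ 0. -/
lemma lucasU_deg (S : ℤ) : ∀ m : ℕ, lucasU (2*S) (S^2) m = m * S^(m-1) ∧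
    lucasU (2*S) (S^2) (m+1) = (m+1) * S^m := by
  intro m
  induction m with
  | zero => simp [lucasU]
  | succ k ih =>
    refine ⟨ih.2, ?_⟩
    show lucasU (2*S) (S^2) (k+2) = _
    rw [lucasU, ih.1, ih.2]
    cases k with
    | zero => ring
    | succ j =>
      simp only [Nat.add_sub_cancel]
      push_cast
      ring

noncomputable def cseq : ℤ → ℝ := fun n => if n = 1 then 1 else 0

lemma lucasUZ_nat (S : ℤ) (m : ℕ) :
    lucasUZ (2*S) (S^2) (m : ℤ) = (m : ℝ) * (S:ℝ)^(m-1) := by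
  simp [lucasUZ, (lucasU_deg S m).1]

lemma lucasUZ_neg (P Q : ℤ) (n : ℤ) (h : n < 0) : lucasUZ P Q n = 0 := by
  simp [lucasUZ, h]

noncomputable def bseq (S : ℤ) : ℤ → ℝ := fun n => if n ≤ 0 then 0 else ((S:ℝ)^2)^(n-1).toNat

lemma step1 (S : ℤ) : logOp (lucasUZ (2*S) (S^2)) = bseq S := by
  funext n
  rcases lt_trichotomy n 0 with h | rfl | h
  · have h1 : n - 1 < 0 := by omega
    rw [logOp, lucasUZ_neg _ _ _ h, lucasUZ_neg _ _ _ h1, bseq]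
    simp [show n ≤ 0 by omega]
  · have h1 : (-1 : ℤ) < 0 := by norm_num
    rw [logOp]
    rw [show (0:ℤ) - 1 = -1 by ring, lucasUZ_neg _ _ _ h1]
    have : lucasUZ (2*S) (S^2) (0:ℤ) = 0 := by
      simpa using lucasUZ_nat S 0
    rw [this, bseq]; simp
  · -- n ≥ 1, write n = m+1
    obtain ⟨m, rfl⟩ : ∃ m : ℕ, n = (m : ℤ) + 1 := ⟨(n-1).toNat, by omega⟩
    rw [logOp, bseq]
    rw [if_neg (show ¬ (((m:ℤ)+1) ≤ 0) by omega)]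
    have e3 : ((m:ℤ) + 1 - 1).toNat = m := by omega
    rw [e3]
    have e0 : ((m:ℤ) + 1) - 1 = (m : ℤ) := by ring
    have e1 : ((m:ℤ) + 1) + 1 = ((m+2 : ℕ) : ℤ) := by push_cast; ring
    have e2 : ((m:ℤ) + 1) = ((m+1 : ℕ) : ℤ) := by push_cast; ring
    rw [e0, e1]
    conv_lhs => rw [e2]
    rw [lucasUZ_nat, lucasUZ_nat, lucasUZ_nat]
    cases m with
    | zero => simp
    | succ j =>
      push_cast [Nat.add_sub_cancel]
      ring

lemma step2 (S : ℤ) : logOp (bseq S) = cseq := by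
  funext n
  rcases lt_trichotomy n 1 with h | rfl | h
  · have : n ≤ 0 := by omega
    have h1 : n - 1 ≤ 0 := by omega
    simp [logOp, bseq, cseq, this, h1, show n ≠ 1 by omega]
  · simp [logOp, bseq, cseq]
  · -- n ≥ 2
    have h1 : ¬ n ≤ 0 := by omega
    have h2 : ¬ n - 1 ≤ 0 := by omega
    have h3 : ¬ n + 1 ≤ 0 := by omega
    simp only [logOp, bseq, cseq, h1, h2, h3, if_false, show n ≠ 1 by omega]
    have he : (n-1).toNat * 2 = (n-1-1).toNat + (n+1-1).toNat := by omega
    rw [← pow_mul, ← pow_add, he, sub_self]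

lemma step3 : logOp cseq = cseq := by
  funext n
  have hprod : cseq (n-1) * cseq (n+1) = 0 := by
    rcases eq_or_ne (n-1) 1 with h | h
    · have : n + 1 ≠ 1 := by omega
      simp [cseq, this]
    · simp [cseq, h]
  rw [logOp, hprod, sub_zero]
  rcases eq_or_ne n 1 with h | h <;> simp [cseq, h]

theorem lucasU_zero_discriminant_inf_log_concave (P Q : ℤ)
    (hS : ∃ S : ℤ, P = 2 * S ∧ Q = S ^ 2) :
    ∀ i : ℕ, 1 ≤ i → ∀ n : ℤ, 0 ≤ (logOp^[i] (lucasUZ P Q)) n := by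
  obtain ⟨S, rfl, rfl⟩ := hS
  have hb : ∀ n, 0 ≤ bseq S n := by
    intro n
    rw [bseq]
    split
    · exact le_refl 0
    · positivity
  have hc : ∀ n, 0 ≤ cseq n := by
    intro n; rw [cseq]; split <;> norm_num
  have hiter : ∀ k : ℕ, logOp^[k] cseq = cseq := by
    intro k
    induction k with
    | zero => rfl
    | succ j ih => rw [Function.iterate_succ_apply, step3, ih]
  intro i hi n
  match i, hi with
  | 1, _ =>
    rw [Function.iterate_one, step1]
    exact hb n
  | (k+2), _ =>
    have h2 : logOp^[2] (lucasUZ (2*S) (S^2)) = cseq := by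
      show logOp (logOp (lucasUZ (2*S) (S^2))) = cseq
      rw [step1, step2]
    rw [Function.iterate_add_apply, h2, hiter]
    exact hc n
end

section
/- Let P, Q be integers with Q ≥ 0 and P^2 − 4Q > 0 (equivalently, Q ≥ 0 and either P > 2√Q or P < −2√Q). Then the Lucas sequence U = U(P,Q), extended to ℤ by zero on negative indices, is 1-fold log-concave: (𝓛 U) n ≥ 0 for every n ∈ ℤ. -/
lemma lucasU_catalan (P Q : ℤ) : ∀ n : ℕ,
    lucasU P Q (n + 1) ^ 2 - lucasU P Q n * lucasU P Q (n + 2) = Q ^ n := by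
  intro n
  induction n with
  | zero => simp [lucasU]
  | succ m ih =>
    have h3 : lucasU P Q (m + 3) = P * lucasU P Q (m + 2) - Q * lucasU P Q (m + 1) := rfl
    have h2 : lucasU P Q (m + 2) = P * lucasU P Q (m + 1) - Q * lucasU P Q m := rfl
    linear_combination Q * ih - lucasU P Q (m + 1) * h3 + lucasU P Q (m + 2) * h2

theorem lucasU_pos_discriminant_log_concave (P Q : ℤ) (hQ : 0 ≤ Q)
    (hD : (0 : ℤ) < P ^ 2 - 4 * Q) :
    ∀ n : ℤ, 0 ≤ logOp (lucasUZ P Q) n := by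
  intro n
  unfold logOp lucasUZ
  rcases lt_trichotomy n 0 with hn | hn | hn
  · simp only [hn, if_pos]
    have h1 : n - 1 < 0 := by omega
    simp only [h1, if_pos]
    simp
  · subst hn
    norm_num [lucasU]
  · have h0 : ¬ n < 0 := by omega
    have h1 : ¬ n - 1 < 0 := by omega
    have h2 : ¬ n + 1 < 0 := by omega
    simp only [h0, h1, h2, if_neg, if_false]
    obtain ⟨m, hm⟩ : ∃ m : ℕ, n = (m : ℤ) + 1 := ⟨(n - 1).toNat, by omega⟩
    have e1 : n.toNat = m + 1 := by omega
    have e2 : (n - 1).toNat = m := by omega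
    have e3 : (n + 1).toNat = m + 2 := by omega
    rw [e1, e2, e3]
    have := lucasU_catalan P Q m
    have : (0:ℤ) ≤ lucasU P Q (m + 1) ^ 2 - lucasU P Q m * lucasU P Q (m + 2) := by
      rw [this]; positivity
    have : (0:ℝ) ≤ (lucasU P Q (m + 1) : ℝ) ^ 2 - lucasU P Q m * lucasU P Q (m + 2) := by
      exact_mod_cast this
    push_cast at this ⊢
    linarith
end

section
/- The sequence of Mersenne numbers M n = 2^n − 1 (that is, the Lucas sequence U(3,2)), extended to ℤ by zero on negative indices, is infinitely log-concave: for every i ≥ 1 and every n ∈ ℤ, (𝓛^i M) n ≥ 0. -/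
/-- The Mersenne numbers `2 ^ n - 1`, extended to `ℤ` by zero on negative indices,
as a real sequence. -/
def mersenneZ : ℤ → ℝ := fun n => if n < 0 then 0 else (2 : ℝ) ^ n.toNat - 1

/-- The shifted geometric sequence `2^(n-1)` for `n ≥ 1`, zero otherwise. -/
def geomZ : ℤ → ℝ := fun n => if n < 1 then 0 else (2 : ℝ) ^ (n - 1).toNat

/-- The delta function at 1. -/
def deltaZ : ℤ → ℝ := fun n => if n = 1 then 1 else 0

lemma logOp_mersenneZ : logOp mersenneZ = geomZ := by
  funext n
  unfold logOp mersenneZ geomZ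
  rcases lt_trichotomy n 0 with h | h | h
  · have h1 : n - 1 < 0 := by omega
    have h2 : n < 1 := by omega
    simp [h, h1, h2]
  · subst h
    norm_num
  · obtain ⟨m, rfl⟩ : ∃ m : ℕ, n = (m : ℤ) + 1 := ⟨(n - 1).toNat, by omega⟩
    have h0 : ¬ ((m : ℤ) + 1 < 0) := by omega
    have h1 : ¬ ((m : ℤ) + 1 - 1 < 0) := by omega
    have h2 : ¬ ((m : ℤ) + 1 + 1 < 0) := by omega
    have h3 : ¬ ((m : ℤ) + 1 < 1) := by omega
    have e0 : ((m : ℤ) + 1).toNat = m + 1 := by omega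
    have e1 : ((m : ℤ) + 1 - 1).toNat = m := by omega
    have e2 : ((m : ℤ) + 1 + 1).toNat = m + 2 := by omega
    rw [if_neg h0, if_neg h1, if_neg h2, if_neg h3, e0, e1, e2]
    rw [pow_succ, pow_succ, pow_succ]
    ring

lemma logOp_geomZ : logOp geomZ = deltaZ := by
  funext n
  unfold logOp geomZ deltaZ
  rcases lt_trichotomy n 1 with h | h | h
  · have h1 : n - 1 < 1 := by omega
    have h2 : n ≠ 1 := by omega
    simp [h, h1, h2]
  · subst h
    norm_num
  · obtain ⟨m, rfl⟩ : ∃ m : ℕ, n = (m : ℤ) + 2 := ⟨(n - 2).toNat, by omega⟩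
    have h0 : ¬ ((m : ℤ) + 2 < 1) := by omega
    have h1 : ¬ ((m : ℤ) + 2 - 1 < 1) := by omega
    have h2 : ¬ ((m : ℤ) + 2 + 1 < 1) := by omega
    have h3 : ((m : ℤ) + 2) ≠ 1 := by omega
    have e0 : ((m : ℤ) + 2 - 1).toNat = m + 1 := by omega
    have e1 : ((m : ℤ) + 2 - 1 - 1).toNat = m := by omega
    have e2 : ((m : ℤ) + 2 + 1 - 1).toNat = m + 2 := by omega
    rw [if_neg h0, if_neg h1, if_neg h2, if_neg h3, e0, e1, e2]
    rw [pow_succ, pow_succ, pow_succ]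
    ring

lemma logOp_deltaZ : logOp deltaZ = deltaZ := by
  funext n
  unfold logOp deltaZ
  by_cases h : n = 1
  · subst h
    norm_num
  · have h2 : ¬ (n - 1 = 1 ∧ n + 1 = 1) := by omega
    rw [if_neg h]
    by_cases h3 : n - 1 = 1
    · have h4 : n + 1 ≠ 1 := by omega
      rw [if_neg h4]
      ring
    · rw [if_neg h3]
      ring

lemma iter_two (k : ℕ) : logOp^[k + 2] mersenneZ = deltaZ := by
  induction k with
  | zero =>
    show logOp^[2] mersenneZ = deltaZ
    rw [show (2 : ℕ) = 1 + 1 from rfl, Function.iterate_succ_apply,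
      Function.iterate_succ_apply, Function.iterate_zero_apply,
      logOp_mersenneZ, logOp_geomZ]
  | succ k ih =>
    rw [show k + 1 + 2 = (k + 2) + 1 from rfl, Function.iterate_succ_apply', ih, logOp_deltaZ]

theorem mersenne_inf_log_concave :
    ∀ i : ℕ, 1 ≤ i → ∀ n : ℤ, 0 ≤ (logOp^[i] mersenneZ) n := by
  intro i hi n
  match i, hi with
  | 1, _ =>
    rw [Function.iterate_one, logOp_mersenneZ]
    unfold geomZ
    split
    · exact le_refl 0
    · positivity
  | (k + 2), _ =>
    rw [iter_two]
    unfold deltaZ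
    split <;> norm_num
end
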